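/- Let 2 ≤ q ≤ r be integers and 0 ≤ a ≤ 1. Let f : {pairs of [q]} → [0,1] be defined by f(12) = a and f(ij) = 0 for all other pairs, and let F = {(q,f), K_{r+1}^0} (so F-free weighted graphs are K_{r+1}-free graphs in which no q-clique has an edge of weight greater than a). Then d(F) = max{ 1 − 1/(q−1), a·(1 − 1/r) }. -/

import Mathlib

open Finset
open scoped Classical

/-- A weighted clique `(r, f)`: a size `r` together with weights on its pairs. -/
structure WeightedClique where
  r : ℕ
  f : Fin r → Fin r → ℝ

/-- `K_r^a`: the weighted clique of size `r` with all weights equal to `a`. -/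
def constWeightedClique (r : ℕ) (a : ℝ) : WeightedClique := ⟨r, fun _ _ => a⟩

/-- An edge-weighted graph `(G, w)` contains the weighted clique `C`. -/
def ContainsWC {n : ℕ} (G : SimpleGraph (Fin n)) (w : Fin n → Fin n → ℝ)
    (C : WeightedClique) : Prop :=
  ∃ φ : Fin C.r → Fin n, Function.Injective φ ∧
    ∀ i j : Fin C.r, i < j → G.Adj (φ i) (φ j) ∧ C.f i j < w (φ i) (φ j)

/-- `(G, w)` is `F`-free: it contains no member of `F`. -/
def WCFree {n : ℕ} (G : SimpleGraph (Fin n)) (w : Fin n → Fin n → ℝ)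
    (F : Set WeightedClique) : Prop :=
  ∀ C ∈ F, ¬ ContainsWC G w C

/-- `w(G) = (2/n²)·∑_{e ∈ E(G)} w(e)`, written as a sum over ordered pairs of
adjacent vertices (each edge counted twice), divided by `n²`. -/
noncomputable def wSum {n : ℕ} (G : SimpleGraph (Fin n)) (w : Fin n → Fin n → ℝ) : ℝ :=
  ((n : ℝ) ^ 2)⁻¹ * ∑ u : Fin n, ∑ v : Fin n, if G.Adj u v then w u v else 0

/-- `β_n(F)`: the supremum of `w(G)` over all `F`-free edge-weighted graphs on
`n` vertices, with edge weights in `[0,1]`. -/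
noncomputable def betaWC (F : Set WeightedClique) (n : ℕ) : ℝ :=
  sSup { x : ℝ | ∃ (G : SimpleGraph (Fin n)) (w : Fin n → Fin n → ℝ),
    (∀ u v, w u v = w v u) ∧
    (∀ u v, G.Adj u v → w u v ∈ Set.Icc (0 : ℝ) 1) ∧
    WCFree G w F ∧ x = wSum G w }

/-- The weighted clique `(q, f)` with `f(12) = a` and `f ≡ 0` on all other pairs
(0-indexed: the pair `{0,1}` gets weight `a`). -/
def chubbyWC (q : ℕ) (a : ℝ) : WeightedClique :=
  ⟨q, fun i j => if (i.val = 0 ∧ j.val = 1) ∨ (i.val = 1 ∧ j.val = 0) then a else 0⟩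


lemma natmin (q s : ℕ) (hq : 2 ≤ q) (hs : 1 ≤ s) :
    min (s-1) (q-2) * (q-1) ≤ (q-2) * s := by
  obtain ⟨x, rfl⟩ := Nat.exists_eq_add_of_le hs
  obtain ⟨y, rfl⟩ := Nat.exists_eq_add_of_le hq
  simp only [show 1+x-1 = x by omega, show x+1-1 = x by omega, show 2+y-2 = y by omega,
    show 2+y-1 = y+1 by omega, show 1+x = x+1 from by omega]
  rcases le_total x y with h|h
  · rw [min_eq_left h]; nlinarith
  · rw [min_eq_right h]; nlinarith

lemma tQ_eq (q : ℕ) (hq : 2 ≤ q) : 1 - 1/((q:ℝ)-1) = ((q:ℝ)-2)/((q:ℝ)-1) := by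
  have : (q:ℝ) - 1 ≠ 0 := by
    have : (2:ℝ) ≤ q := by exact_mod_cast hq
    linarith
  field_simp; ring

lemma cross_small (q s d : ℕ) (hq : 2 ≤ q) (hs : 1 ≤ s) (hd1 : d ≤ s - 1) (hd2 : d ≤ q - 2) :
    (d : ℝ) ≤ (1 - 1/((q:ℝ)-1)) * s := by
  have hQ1 : (0:ℝ) < (q:ℝ) - 1 := by
    have : (2:ℝ) ≤ q := by exact_mod_cast hq
    linarith
  rw [tQ_eq q hq, div_mul_eq_mul_div, le_div_iff₀ hQ1]
  have h := natmin q s hq hs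
  have hd : d ≤ min (s-1) (q-2) := le_min hd1 hd2
  have : d * (q-1) ≤ (q-2) * s := le_trans (Nat.mul_le_mul_right _ hd) h
  calc (d:ℝ) * ((q:ℝ)-1) = ((d * (q-1) : ℕ) : ℝ) := by
        push_cast [Nat.cast_sub (by omega : 1 ≤ q)]; ring
    _ ≤ (((q-2) * s : ℕ) : ℝ) := by exact_mod_cast this
    _ = ((q:ℝ)-2) * s := by push_cast [Nat.cast_sub (by omega : 2 ≤ q)]; ring

lemma cross_big (r s : ℕ) (hr : 1 ≤ r) (hs : 1 ≤ s) (hsr : s ≤ r) (a : ℝ) (ha : 0 ≤ a) :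
    a * ((s:ℝ) - 1) ≤ a * (1 - 1/(r:ℝ)) * s := by
  have hr0 : (0:ℝ) < r := by exact_mod_cast hr
  have hs0 : (0:ℝ) < s := by exact_mod_cast hs
  have hsr' : (s:ℝ) ≤ r := by exact_mod_cast hsr
  have : (s:ℝ) - 1 ≤ (1 - 1/(r:ℝ)) * s := by
    have h1 : (s:ℝ)/r ≤ 1 := by rw [div_le_one hr0]; exact hsr'
    have e : (1 - 1/(r:ℝ)) * s = s - s/r := by field_simp
    rw [e]; linarith
  nlinarith

lemma tQ_nonneg (q : ℕ) (hq : 2 ≤ q) : 0 ≤ 1 - 1/((q:ℝ)-1) := by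
  have h2 : (2:ℝ) ≤ q := by exact_mod_cast hq
  have : (0:ℝ) < (q:ℝ) - 1 := by linarith
  have : 1/((q:ℝ)-1) ≤ 1 := by
    rw [div_le_one this]; linarith
  linarith

lemma key (n q r : ℕ) (hq : 2 ≤ q) (hqr : q ≤ r) (a : ℝ) (ha : 0 ≤ a)
    (H : SimpleGraph (Fin n))
    (w : Fin n → Fin n → ℝ) (hsym : ∀ u v, w u v = w v u)
    (hw0 : ∀ u v, H.Adj u v → 0 ≤ w u v) (hw1 : ∀ u v, H.Adj u v → w u v ≤ 1)
    (hfree : H.CliqueFree (r+1))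
    (hqa : ∀ S : Finset (Fin n), H.IsNClique q S → ∀ u ∈ S, ∀ v ∈ S, u ≠ v → w u v ≤ a) :
    ∀ A : Finset (Fin n), ∑ u ∈ A, ∑ v ∈ A, (if H.Adj u v then w u v else 0)
      ≤ max (1 - 1/((q:ℝ)-1)) (a*(1-1/(r:ℝ))) * (A.card:ℝ)^2 := by
  set M : ℝ := max (1 - 1/((q:ℝ)-1)) (a*(1-1/(r:ℝ))) with hMdef
  have hM0 : 0 ≤ M := le_trans (tQ_nonneg q hq) (le_max_left _ _)
  set F : Fin n → Fin n → ℝ := fun u v => if H.Adj u v then w u v else 0 with hFdef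
  have hFsym : ∀ u v, F u v = F v u := by
    intro u v
    by_cases h : H.Adj u v
    · simp [hFdef, h, h.symm, hsym u v]
    · have h' : ¬ H.Adj v u := fun hc => h hc.symm
      simp [hFdef, h, h']
  intro A
  induction A using Finset.strongInduction with
  | _ A ih =>
  rcases A.eq_empty_or_nonempty with rfl | ⟨v₀, hv₀⟩
  · simp
  · -- pick a maximum-size clique S inside A
    set 𝒞 := A.powerset.filter (fun S : Finset (Fin n) => H.IsClique (S : Set (Fin n))) with h𝒞
    have h𝒞ne : 𝒞.Nonempty := by
      refine ⟨{v₀}, ?_⟩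
      simp only [h𝒞, mem_filter, mem_powerset, singleton_subset_iff]
      exact ⟨hv₀, by simp⟩
    obtain ⟨S, hS𝒞, hSmax⟩ := 𝒞.exists_max_image card h𝒞ne
    rw [h𝒞, mem_filter, mem_powerset] at hS𝒞
    obtain ⟨hSA, hScl⟩ := hS𝒞
    set s := S.card with hs
    have hs1 : 1 ≤ s := by
      have := hSmax {v₀} (by
        simp only [h𝒞, mem_filter, mem_powerset, singleton_subset_iff]
        exact ⟨hv₀, by simp⟩)
      simpa using this
    have hSne : S.Nonempty := card_pos.mp hs1
    have hsr : s ≤ r := by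
      by_contra hc
      obtain ⟨T, hTS, hTcard⟩ := exists_subset_card_eq (show r+1 ≤ S.card by omega)
      exact hfree T ⟨hScl.subset (by exact_mod_cast hTS), hTcard⟩
    have hsA : s ≤ A.card := card_le_card hSA
    have hr1 : 1 ≤ r := by omega
    -- maximality: outside vertices have at most s-1 neighbours in S
    have hdeg : ∀ v ∈ A \ S, (S.filter (fun u => H.Adj v u)).card ≤ s - 1 := by
      intro v hv
      rw [mem_sdiff] at hv
      obtain ⟨hvA, hvS⟩ := hv
      by_contra hc
      have hcard : s ≤ (S.filter (fun u => H.Adj v u)).card := by omega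
      have heq : S.filter (fun u => H.Adj v u) = S :=
        eq_of_subset_of_card_le (filter_subset _ _) hcard
      have hadj : ∀ u ∈ S, H.Adj v u := by
        intro u hu
        have : u ∈ S.filter (fun u => H.Adj v u) := by rw [heq]; exact hu
        exact (mem_filter.mp this).2
      have hins : insert v S ∈ 𝒞 := by
        simp only [h𝒞, mem_filter, mem_powerset]
        constructor
        · exact insert_subset hvA hSA
        · rw [coe_insert]
          exact hScl.insert (fun b hb _ => hadj b hb)
      have := hSmax _ hins
      rw [card_insert_of_notMem hvS] at this
      omega
    -- cross bound
    have hcross : ∀ v ∈ A \ S, ∑ u ∈ S, F v u ≤ M * s := by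
      intro v hv
      have hvS : v ∉ S := (mem_sdiff.mp hv).2
      set N := S.filter (fun u => H.Adj v u) with hN
      set d := N.card with hd
      have hds : d ≤ s - 1 := hdeg v hv
      have hsum : ∑ u ∈ S, F v u = ∑ u ∈ N, w v u := by
        rw [hN, sum_filter]
      have hNS : N ⊆ S := filter_subset _ _
      have hNadj : ∀ u ∈ N, H.Adj v u := fun u hu => (mem_filter.mp hu).2
      rcases le_or_gt (q-1) d with hbig | hsmall
      · -- all cross weights at most a
        have hwa : ∀ u ∈ N, w v u ≤ a := by
          intro u hu
          obtain ⟨T, hTsub, hTcard⟩ := exists_subset_card_eq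
            (show q-2 ≤ (N.erase u).card by rw [card_erase_of_mem hu]; omega)
          have huT : u ∉ T := fun h => (notMem_erase u N) (hTsub h)
          set T' := insert u T with hT'
          have hT'N : T' ⊆ N := insert_subset hu (hTsub.trans (erase_subset _ _))
          have hT'card : T'.card = q - 1 := by
            rw [hT', card_insert_of_notMem huT, hTcard]; omega
          have hvT' : v ∉ T' := fun h => hvS (hNS (hT'N h))
          have hT'cl : H.IsClique (T' : Set (Fin n)) :=
            hScl.subset (by exact_mod_cast hT'N.trans hNS)
          have hQcl : H.IsClique ((insert v T' : Finset _) : Set (Fin n)) := by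
            rw [coe_insert]
            exact hT'cl.insert (fun b hb _ => hNadj b (hT'N hb))
          have hQ : H.IsNClique q (insert v T') := by
            refine ⟨hQcl, ?_⟩
            rw [card_insert_of_notMem hvT', hT'card]; omega
          exact hqa _ hQ v (mem_insert_self v _) u (mem_insert_of_mem (mem_insert_self u T))
            (by rintro rfl; exact hvS (hNS hu))
        calc ∑ u ∈ S, F v u = ∑ u ∈ N, w v u := hsum
          _ ≤ ∑ u ∈ N, a := sum_le_sum (fun u hu => hwa u hu)
          _ = a * d := by rw [sum_const, hd, nsmul_eq_mul]; ring
          _ ≤ a * ((s:ℝ) - 1) := by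
              have : (d:ℝ) ≤ (s:ℝ) - 1 := by
                have : ((d:ℕ):ℝ) ≤ ((s-1:ℕ):ℝ) := by exact_mod_cast hds
                rwa [Nat.cast_sub hs1, Nat.cast_one] at this
              nlinarith
          _ ≤ a * (1 - 1/(r:ℝ)) * s := cross_big r s hr1 hs1 hsr a ha
          _ ≤ M * s := by
              apply mul_le_mul_of_nonneg_right (le_max_right _ _)
              positivity
      · -- few neighbours: weights at most 1
        have hdq : d ≤ q - 2 := by omega
        calc ∑ u ∈ S, F v u = ∑ u ∈ N, w v u := hsum
          _ ≤ ∑ u ∈ N, 1 := sum_le_sum (fun u hu => hw1 v u (hNadj u hu))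
          _ = (d:ℝ) := by rw [sum_const, hd, nsmul_eq_mul]; ring
          _ ≤ (1 - 1/((q:ℝ)-1)) * s := cross_small q s d hq hs1 hds hdq
          _ ≤ M * s := by
              apply mul_le_mul_of_nonneg_right (le_max_left _ _)
              positivity
    -- inside bound
    have hins : ∑ u ∈ S, ∑ v ∈ S, F u v ≤ M * (s:ℝ)^2 := by
      have hdiag : ∀ u, F u u = 0 := by
        intro u; simp [hFdef]
      rcases le_or_gt q s with hqs | hsq
      · -- every pair in S lies in a q-clique, weights ≤ a
        have hwa : ∀ u ∈ S, ∀ v ∈ S, u ≠ v → w u v ≤ a := by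
          intro u hu v hv huv
          obtain ⟨T, hTsub, hTcard⟩ := exists_subset_card_eq
            (show q-2 ≤ ((S.erase u).erase v).card by
              rw [card_erase_of_mem (mem_erase.mpr ⟨huv.symm, hv⟩), card_erase_of_mem hu]; omega)
          have hvT : v ∉ T := fun h => (notMem_erase v _) (hTsub h)
          have huT : u ∉ insert v T := by
            simp only [mem_insert]
            rintro (rfl | h)
            · exact huv rfl
            · exact (notMem_erase u S) ((erase_subset _ _) (hTsub h))
          set Q := insert u (insert v T) with hQdef
          have hQS : Q ⊆ S := by
            refine insert_subset hu (insert_subset hv ?_)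
            exact hTsub.trans ((erase_subset _ _).trans (erase_subset _ _))
          have hQ : H.IsNClique q Q := by
            refine ⟨hScl.subset (by exact_mod_cast hQS), ?_⟩
            rw [hQdef, card_insert_of_notMem huT, card_insert_of_notMem hvT, hTcard]; omega
          exact hqa Q hQ u (mem_insert_self _ _) v (mem_insert_of_mem (mem_insert_self _ _)) huv
        have hrow : ∀ u ∈ S, ∑ v ∈ S, F u v ≤ ((s:ℝ) - 1) * a := by
          intro u hu
          have : ∑ v ∈ S, F u v = ∑ v ∈ S.erase u, F u v := (sum_erase _ (hdiag u)).symm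
          rw [this]
          calc ∑ v ∈ S.erase u, F u v ≤ ∑ v ∈ S.erase u, a := by
                refine sum_le_sum (fun v hv => ?_)
                have hvu : v ≠ u := (mem_erase.mp hv).1
                have hvS : v ∈ S := (mem_erase.mp hv).2
                by_cases hadj : H.Adj u v
                · simpa [hFdef, hadj] using hwa u hu v hvS hvu.symm
                · simp [hFdef, hadj, ha]
            _ = ((s:ℝ) - 1) * a := by
                rw [sum_const, card_erase_of_mem hu, nsmul_eq_mul,
                  Nat.cast_sub hs1, Nat.cast_one]
        calc ∑ u ∈ S, ∑ v ∈ S, F u v ≤ ∑ u ∈ S, ((s:ℝ) - 1) * a := sum_le_sum hrow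
          _ = (s:ℝ) * (((s:ℝ) - 1) * a) := by rw [sum_const, nsmul_eq_mul]
          _ = a * ((s:ℝ) - 1) * s := by ring
          _ ≤ a * (1 - 1/(r:ℝ)) * s * s := by
              have := cross_big r s hr1 hs1 hsr a ha
              have hs0 : (0:ℝ) ≤ s := by positivity
              nlinarith
          _ ≤ M * (s:ℝ)^2 := by
              have hs0 : (0:ℝ) ≤ s := by positivity
              have := le_max_right (1 - 1/((q:ℝ)-1)) (a*(1-1/(r:ℝ)))
              nlinarith
      · -- S small: weights at most 1
        have hrow : ∀ u ∈ S, ∑ v ∈ S, F u v ≤ ((s:ℝ) - 1) := by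
          intro u hu
          have : ∑ v ∈ S, F u v = ∑ v ∈ S.erase u, F u v := (sum_erase _ (hdiag u)).symm
          rw [this]
          calc ∑ v ∈ S.erase u, F u v ≤ ∑ v ∈ S.erase u, 1 := by
                refine sum_le_sum (fun v hv => ?_)
                by_cases hadj : H.Adj u v
                · simpa [hFdef, hadj] using hw1 u v hadj
                · simp [hFdef, hadj]
            _ = ((s:ℝ) - 1) := by
                rw [sum_const, card_erase_of_mem hu, nsmul_eq_mul,
                  Nat.cast_sub hs1, Nat.cast_one]; ring
        have hstep : ((s:ℝ) - 1) ≤ (1 - 1/((q:ℝ)-1)) * s := by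
          have := cross_small q s (s-1) hq hs1 le_rfl (by omega)
          rwa [Nat.cast_sub hs1, Nat.cast_one] at this
        calc ∑ u ∈ S, ∑ v ∈ S, F u v ≤ ∑ u ∈ S, ((s:ℝ) - 1) := sum_le_sum hrow
          _ = (s:ℝ) * ((s:ℝ) - 1) := by rw [sum_const, nsmul_eq_mul]
          _ ≤ (1 - 1/((q:ℝ)-1)) * s * s := by
              have hs0 : (0:ℝ) ≤ s := by positivity
              nlinarith
          _ ≤ M * (s:ℝ)^2 := by
              have hs0 : (0:ℝ) ≤ s := by positivity
              have := le_max_left (1 - 1/((q:ℝ)-1)) (a*(1-1/(r:ℝ)))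
              nlinarith
    -- combine
    have hAsplit : ∀ g : Fin n → ℝ, ∑ u ∈ A, g u = ∑ u ∈ A \ S, g u + ∑ u ∈ S, g u :=
      fun g => (sum_sdiff hSA).symm
    have hrest : ∑ u ∈ A \ S, ∑ v ∈ A \ S, F u v ≤ M * ((A \ S).card : ℝ)^2 :=
      ih (A \ S) (Finset.sdiff_ssubset hSA hSne)
    have hcrossS : ∑ v ∈ A \ S, ∑ u ∈ S, F v u ≤ ((A \ S).card : ℝ) * (M * s) := by
      calc ∑ v ∈ A \ S, ∑ u ∈ S, F v u ≤ ∑ v ∈ A \ S, M * s :=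
            sum_le_sum (fun v hv => hcross v hv)
        _ = ((A \ S).card : ℝ) * (M * s) := by rw [sum_const, nsmul_eq_mul]
    have hswap : ∑ u ∈ S, ∑ v ∈ A \ S, F u v = ∑ v ∈ A \ S, ∑ u ∈ S, F v u := by
      rw [Finset.sum_comm]
      exact sum_congr rfl (fun v _ => sum_congr rfl (fun u _ => hFsym u v))
    have hcardAS : ((A \ S).card : ℝ) = (A.card : ℝ) - s := by
      rw [card_sdiff_of_subset hSA, Nat.cast_sub hsA]
    calc ∑ u ∈ A, ∑ v ∈ A, F u v
        = ∑ u ∈ A \ S, (∑ v ∈ A \ S, F u v + ∑ v ∈ S, F u v)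
          + ∑ u ∈ S, (∑ v ∈ A \ S, F u v + ∑ v ∈ S, F u v) := by
          rw [hAsplit (fun u => ∑ v ∈ A, F u v)]
          congr 1 <;> exact sum_congr rfl (fun u _ => hAsplit (fun v => F u v))
      _ = ∑ u ∈ A \ S, ∑ v ∈ A \ S, F u v + ∑ v ∈ A \ S, ∑ u ∈ S, F v u
          + (∑ u ∈ S, ∑ v ∈ A \ S, F u v + ∑ u ∈ S, ∑ v ∈ S, F u v) := by
          rw [sum_add_distrib, sum_add_distrib]
      _ ≤ M * ((A \ S).card : ℝ)^2 + ((A \ S).card : ℝ) * (M * s)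
          + (((A \ S).card : ℝ) * (M * s) + M * (s:ℝ)^2) := by
          refine add_le_add (add_le_add hrest hcrossS) (add_le_add ?_ hins)
          rw [hswap]; exact hcrossS
      _ = M * (A.card : ℝ)^2 := by rw [hcardAS]; ring

section Upper

variable {n q r : ℕ} {a : ℝ}

/-- The positive-weight subgraph. -/
def posSub {n : ℕ} (G : SimpleGraph (Fin n)) (w : Fin n → Fin n → ℝ)
    (hsym : ∀ u v, w u v = w v u) : SimpleGraph (Fin n) where
  Adj u v := G.Adj u v ∧ 0 < w u v
  symm := by
    constructor
    intro u v ⟨h1, h2⟩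
    exact ⟨h1.symm, (hsym v u).symm ▸ h2⟩
  loopless := ⟨fun u h => G.loopless.irrefl u h.1⟩

lemma wSum_posSub {n : ℕ} (G : SimpleGraph (Fin n)) (w : Fin n → Fin n → ℝ)
    (hsym : ∀ u v, w u v = w v u) (hw : ∀ u v, G.Adj u v → w u v ∈ Set.Icc (0:ℝ) 1) :
    wSum G w = wSum (posSub G w hsym) w := by
  unfold wSum
  congr 1
  refine Finset.sum_congr rfl (fun u _ => Finset.sum_congr rfl (fun v _ => ?_))
  by_cases hp : (posSub G w hsym).Adj u v
  · rw [if_pos hp, if_pos hp.1]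
  · rw [if_neg hp]
    by_cases h : G.Adj u v
    · rw [if_pos h]
      have hnp : ¬ 0 < w u v := fun hc => hp ⟨h, hc⟩
      exact le_antisymm (not_lt.mp hnp) (hw u v h).1
    · rw [if_neg h]

lemma posSub_cliqueFree {n r : ℕ} (G : SimpleGraph (Fin n)) (w : Fin n → Fin n → ℝ)
    (hsym : ∀ u v, w u v = w v u)
    (hno : ¬ ContainsWC G w (constWeightedClique (r+1) 0)) :
    (posSub G w hsym).CliqueFree (r+1) := by
  intro T hT
  apply hno
  refine ⟨fun i => (T.orderIsoOfFin hT.2 i : Fin n), ?_, ?_⟩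
  · intro i j hij
    exact (T.orderIsoOfFin hT.2).injective (Subtype.ext hij)
  · intro i j hij
    have hne : (T.orderIsoOfFin hT.2 i : Fin n) ≠ (T.orderIsoOfFin hT.2 j : Fin n) := by
      intro hc
      exact absurd ((T.orderIsoOfFin hT.2).injective (Subtype.ext hc)) (Fin.ne_of_lt hij)
    have hadj : (posSub G w hsym).Adj _ _ :=
      hT.1 (T.orderIsoOfFin hT.2 i).2 (T.orderIsoOfFin hT.2 j).2 hne
    exact ⟨hadj.1, hadj.2⟩

lemma posSub_qclique {n q : ℕ} {a : ℝ} (hq : 2 ≤ q) (ha : 0 ≤ a)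
    (G : SimpleGraph (Fin n)) (w : Fin n → Fin n → ℝ)
    (hsym : ∀ u v, w u v = w v u)
    (hno : ¬ ContainsWC G w (chubbyWC q a)) :
    ∀ S : Finset (Fin n), (posSub G w hsym).IsNClique q S →
      ∀ u ∈ S, ∀ v ∈ S, u ≠ v → w u v ≤ a := by
  intro S hS u hu v hv huv
  by_contra hc
  push_neg at hc
  apply hno
  obtain ⟨q', rfl⟩ : ∃ q', q = q' + 2 := ⟨q - 2, by omega⟩
  have hcard : S.card = q' + 2 := hS.2
  set ψ := S.orderIsoOfFin hcard with hψ
  set i₀ : Fin (q'+2) := ψ.symm ⟨u, hu⟩ with hi₀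
  set i₁ : Fin (q'+2) := ψ.symm ⟨v, hv⟩ with hi₁
  have hne01 : i₀ ≠ i₁ := by
    intro h
    apply huv
    have := congrArg (fun i => (ψ i : Fin n)) h
    simpa [hi₀, hi₁] using this
  set σ := Equiv.swap (0 : Fin (q'+2)) i₀ with hσ
  set jj := σ i₁ with hjj
  have hjj0 : jj ≠ 0 := by
    intro h
    apply hne01
    have : i₁ = σ 0 := by
      have := congrArg σ h
      rwa [Equiv.swap_apply_self] at this
    rw [this, Equiv.swap_apply_left]
  set τ := Equiv.swap (1 : Fin (q'+2)) jj with hτ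
  set π : Fin (q'+2) ≃ Fin (q'+2) := τ.trans σ with hπ
  have hπ0 : π 0 = i₀ := by
    have hτ0 : τ 0 = 0 :=
      Equiv.swap_apply_of_ne_of_ne (by simp [Fin.ext_iff]) (Ne.symm hjj0)
    simp only [hπ, Equiv.trans_apply, hτ0, hσ, Equiv.swap_apply_left]
  have hπ1 : π 1 = i₁ := by
    have hτ1 : τ 1 = jj := Equiv.swap_apply_left _ _
    simp only [hπ, Equiv.trans_apply, hτ1, hjj, hσ, Equiv.swap_apply_self]
  set φ : Fin (q'+2) → Fin n := fun i => (ψ (π i) : Fin n) with hφ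
  have hφinj : Function.Injective φ := by
    intro i j h
    exact π.injective (ψ.injective (Subtype.ext h))
  have hφ0 : φ 0 = u := by simp [hφ, hπ0, hi₀]
  have hφ1 : φ 1 = v := by simp [hφ, hπ1, hi₁]
  have hφS : ∀ i, φ i ∈ S := fun i => (ψ (π i)).2
  have hφadj : ∀ i j : Fin (q'+2), i ≠ j → (posSub G w hsym).Adj (φ i) (φ j) := by
    intro i j hij
    exact hS.1 (hφS i) (hφS j) (fun h => hij (hφinj h))
  suffices hgood : ∃ φ' : Fin (q'+2) → Fin n, Function.Injective φ' ∧
      ∀ i j : Fin (q'+2), i < j → G.Adj (φ' i) (φ' j) ∧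
        (if (i.val = 0 ∧ j.val = 1) ∨ (i.val = 1 ∧ j.val = 0) then a else 0) < w (φ' i) (φ' j) by
    exact hgood
  refine ⟨φ, hφinj, ?_⟩
  intro i j hij
  have hadj := hφadj i j (Fin.ne_of_lt hij)
  refine ⟨hadj.1, ?_⟩
  by_cases hcase : (i.val = 0 ∧ j.val = 1) ∨ (i.val = 1 ∧ j.val = 0)
  · rw [if_pos hcase]
    rcases hcase with ⟨h0, h1⟩ | ⟨h0, h1⟩
    · have hi : i = 0 := Fin.ext (by simpa using h0)
      have hj : j = 1 := Fin.ext (by simpa using h1)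
      rw [hi, hj, hφ0, hφ1]
      exact hc
    · exfalso
      have : j < i := by
        rw [Fin.lt_def] at hij ⊢
        omega
      exact absurd hij (not_lt.mpr this.le)
  · rw [if_neg hcase]
    exact hadj.2

lemma wSum_le_M (hq : 2 ≤ q) (hqr : q ≤ r) (ha : 0 ≤ a)
    (G : SimpleGraph (Fin n)) (w : Fin n → Fin n → ℝ)
    (hsym : ∀ u v, w u v = w v u)
    (hw : ∀ u v, G.Adj u v → w u v ∈ Set.Icc (0:ℝ) 1)
    (hfree : WCFree G w {chubbyWC q a, constWeightedClique (r + 1) 0}) :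
    wSum G w ≤ max (1 - 1/((q:ℝ)-1)) (a*(1-1/(r:ℝ))) := by
  set M : ℝ := max (1 - 1/((q:ℝ)-1)) (a*(1-1/(r:ℝ))) with hMdef
  have hM0 : 0 ≤ M := le_trans (tQ_nonneg q hq) (le_max_left _ _)
  set H := posSub G w hsym with hH
  have hGadj : ∀ u v, H.Adj u v → G.Adj u v ∧ 0 < w u v := fun u v h => h
  have hbound := key n q r hq hqr a ha H w hsym
    (fun u v h => le_of_lt (hGadj u v h).2)
    (fun u v h => (hw u v (hGadj u v h).1).2)
    (posSub_cliqueFree G w hsym (hfree _ (Set.mem_insert_of_mem _ rfl)))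
    (posSub_qclique hq ha G w hsym (hfree _ (Set.mem_insert _ _)))
    Finset.univ
  rw [wSum_posSub G w hsym hw]
  rcases Nat.eq_zero_or_pos n with rfl | hn
  · simpa [wSum] using hM0
  · unfold wSum
    rw [Finset.card_univ, Fintype.card_fin] at hbound
    have hn2 : (0:ℝ) < (n:ℝ)^2 := by positivity
    calc ((n:ℝ)^2)⁻¹ * ∑ u : Fin n, ∑ v : Fin n, (if H.Adj u v then w u v else 0)
        ≤ ((n:ℝ)^2)⁻¹ * (M * (n:ℝ)^2) := by
          apply mul_le_mul_of_nonneg_left hbound (by positivity)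
      _ = M := by field_simp
end Upper

section Lower

def modGraph (n k : ℕ) : SimpleGraph (Fin n) where
  Adj u v := u.val % k ≠ v.val % k
  symm := ⟨fun _ _ h => Ne.symm h⟩
  loopless := ⟨fun _ h => h rfl⟩

lemma modGraph_cliqueFree (n k : ℕ) (hk : 1 ≤ k) : (modGraph n k).CliqueFree (k+1) := by
  intro T hT
  have hinj : Set.InjOn (fun v : Fin n => v.val % k) (T : Set (Fin n)) := by
    intro u hu v hv h
    by_contra hne
    exact (hT.1 hu hv hne) h
  have hmaps : ∀ v ∈ T, v.val % k ∈ Finset.range k :=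
    fun v _ => Finset.mem_range.mpr (Nat.mod_lt _ hk)
  have := Finset.card_le_card_of_injOn (fun v : Fin n => v.val % k) hmaps hinj
  rw [hT.2, Finset.card_range] at this
  omega

lemma notContains_of_cliqueFree {n : ℕ} (G : SimpleGraph (Fin n)) (w : Fin n → Fin n → ℝ)
    (C : WeightedClique) (h : G.CliqueFree C.r) : ¬ ContainsWC G w C := by
  rintro ⟨φ, hinj, hadj⟩
  apply h (Finset.univ.image φ)
  constructor
  · intro x hx y hy hne
    simp only [Finset.coe_image, Set.mem_image, Finset.coe_univ, Set.image_univ,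
      Set.mem_range] at hx hy
    obtain ⟨i, rfl⟩ := hx
    obtain ⟨j, rfl⟩ := hy
    have hij : i ≠ j := fun h => hne (by rw [h])
    rcases lt_or_gt_of_ne hij with hlt | hgt
    · exact (hadj i j hlt).1
    · exact ((hadj j i hgt).1).symm
  · rw [Finset.card_image_of_injective _ hinj, Finset.card_univ, Fintype.card_fin]

lemma notContains_chubby_const {n q : ℕ} (hq : 2 ≤ q) (G : SimpleGraph (Fin n)) (a : ℝ) :
    ¬ ContainsWC G (fun _ _ => a) (chubbyWC q a) := by
  rintro ⟨φ, hinj, hadj⟩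
  have hr : (chubbyWC q a).r = q := rfl
  set i0 : Fin (chubbyWC q a).r := ⟨0, by rw [hr]; omega⟩ with hi0
  set i1 : Fin (chubbyWC q a).r := ⟨1, by rw [hr]; omega⟩ with hi1
  have hlt : i0 < i1 := by rw [hi0, hi1, Fin.mk_lt_mk]; omega
  have h := (hadj i0 i1 hlt).2
  have hf : (chubbyWC q a).f i0 i1 = a := by simp [chubbyWC, hi0, hi1]
  rw [hf] at h
  exact lt_irrefl a h

lemma modsum_ge (n k : ℕ) (hk : 1 ≤ k) (hn : 1 ≤ n) (c : ℝ) (hc0 : 0 ≤ c) (hc1 : c ≤ 1) :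
    c * (1 - 1/(k:ℝ)) - 1/(n:ℝ) ≤ wSum (modGraph n k) (fun _ _ => c) := by
  have hn0 : (0:ℝ) < n := by exact_mod_cast hn
  have hk0 : (0:ℝ) < k := by exact_mod_cast hk
  have hcard : ∀ u : Fin n,
      ((Finset.univ.filter (fun v : Fin n => v.val % k = u.val % k)).card : ℝ)
        ≤ (n:ℝ)/k + 1 := by
    intro u
    have h1 : (Finset.univ.filter (fun v : Fin n => v.val % k = u.val % k)).card ≤ n / k + 1 := by
      have h2 := Finset.card_le_card_of_injOn (s := Finset.univ.filter (fun v : Fin n => v.val % k = u.val % k))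
        (t := Finset.range (n / k + 1)) (fun v : Fin n => v.val / k) ?_ ?_
      · simpa using h2
      · intro v _
        refine Finset.mem_range.mpr (Nat.lt_succ_of_le ?_)
        exact Nat.div_le_div_right (le_of_lt v.isLt)
      · intro x hx y hy h
        simp only [Finset.coe_filter, Set.mem_setOf_eq, Finset.mem_univ, true_and] at hx hy
        have h' : x.val / k = y.val / k := h
        apply Fin.ext
        have hx' := Nat.div_add_mod x.val k
        have hy' := Nat.div_add_mod y.val k
        rw [h'] at hx'
        omega
    calc ((Finset.univ.filter (fun v : Fin n => v.val % k = u.val % k)).card : ℝ)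
        ≤ ((n / k + 1 : ℕ) : ℝ) := by exact_mod_cast h1
      _ ≤ (n:ℝ)/k + 1 := by push_cast; linarith [Nat.cast_div_le (α := ℝ) (m := n) (n := k)]
  have hrow : ∀ u : Fin n,
      c * (n:ℝ) - c * ((n:ℝ)/k + 1)
        ≤ ∑ v : Fin n, (if (modGraph n k).Adj u v then c else 0) := by
    intro u
    have hterm : ∀ v : Fin n,
        c - (if v.val % k = u.val % k then c else 0)
          ≤ (if (modGraph n k).Adj u v then c else 0) := by
      intro v
      by_cases h : (modGraph n k).Adj u v
      · rw [if_pos h]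
        have : ¬ (v.val % k = u.val % k) := fun hc => h (Eq.symm hc)
        rw [if_neg this]
        linarith
      · rw [if_neg h]
        have hel : u.val % k = v.val % k := not_not.mp h
        rw [if_pos hel.symm]
        linarith
    calc c * (n:ℝ) - c * ((n:ℝ)/k + 1)
        ≤ c * (n:ℝ) - c * ((Finset.univ.filter (fun v : Fin n => v.val % k = u.val % k)).card : ℝ) := by
          have := hcard u
          nlinarith
      _ = ∑ v : Fin n, (c - (if v.val % k = u.val % k then c else 0)) := by
          rw [Finset.sum_sub_distrib, Finset.sum_const, Finset.card_univ, Fintype.card_fin,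
            nsmul_eq_mul, ← Finset.sum_filter, Finset.sum_const, nsmul_eq_mul]
          ring
      _ ≤ ∑ v : Fin n, (if (modGraph n k).Adj u v then c else 0) :=
          Finset.sum_le_sum (fun v _ => hterm v)
  have hSigma : (n:ℝ) * (c * (n:ℝ) - c * ((n:ℝ)/k + 1))
      ≤ ∑ u : Fin n, ∑ v : Fin n, (if (modGraph n k).Adj u v then c else 0) := by
    calc (n:ℝ) * (c * (n:ℝ) - c * ((n:ℝ)/k + 1))
        = ∑ _u : Fin n, (c * (n:ℝ) - c * ((n:ℝ)/k + 1)) := by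
          rw [Finset.sum_const, Finset.card_univ, Fintype.card_fin, nsmul_eq_mul]
      _ ≤ _ := Finset.sum_le_sum (fun u _ => hrow u)
  unfold wSum
  have hinv : (0:ℝ) ≤ ((n:ℝ)^2)⁻¹ := by positivity
  calc c * (1 - 1/(k:ℝ)) - 1/(n:ℝ)
      ≤ c * (1 - 1/(k:ℝ)) - c/(n:ℝ) := by
        have hcn : c/(n:ℝ) ≤ 1/(n:ℝ) := by gcongr
        linarith
      _ = ((n:ℝ)^2)⁻¹ * ((n:ℝ) * (c * (n:ℝ) - c * ((n:ℝ)/k + 1))) := by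
        field_simp
        ring
      _ ≤ ((n:ℝ)^2)⁻¹ * ∑ u : Fin n, ∑ v : Fin n, (if (modGraph n k).Adj u v then c else 0) :=
        mul_le_mul_of_nonneg_left hSigma hinv

end Lower

/-- For `2 ≤ q ≤ r` and `0 ≤ a ≤ 1`, forbidding `K_{r+1}` and any `q`-clique having
an edge of weight larger than `a`, we get
`d(F) = max{1 - 1/(q-1), a(1 - 1/r)}`. -/
theorem dWC_chubby (q r : ℕ) (hq : 2 ≤ q) (hqr : q ≤ r) (a : ℝ)
    (ha : 0 ≤ a) (ha1 : a ≤ 1) :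
    Filter.Tendsto (betaWC {chubbyWC q a, constWeightedClique (r + 1) 0})
      Filter.atTop
      (nhds (max (1 - 1 / ((q : ℝ) - 1)) (a * (1 - 1 / (r : ℝ))))) := by
  set F : Set WeightedClique := {chubbyWC q a, constWeightedClique (r + 1) 0} with hF
  set M : ℝ := max (1 - 1 / ((q : ℝ) - 1)) (a * (1 - 1 / (r : ℝ))) with hM
  have hM0 : 0 ≤ M := le_trans (tQ_nonneg q hq) (le_max_left _ _)
  have hq1 : 1 ≤ q - 1 := by omega
  have hr1 : 1 ≤ r := by omega
  have hub : ∀ n : ℕ, ∀ x ∈ { x : ℝ | ∃ (G : SimpleGraph (Fin n)) (w : Fin n → Fin n → ℝ),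
      (∀ u v, w u v = w v u) ∧
      (∀ u v, G.Adj u v → w u v ∈ Set.Icc (0 : ℝ) 1) ∧
      WCFree G w F ∧ x = wSum G w }, x ≤ M := by
    rintro n x ⟨G, w, hsym, hw, hfree, rfl⟩
    exact wSum_le_M hq hqr ha G w hsym hw hfree
  have hbeta_le : ∀ n : ℕ, betaWC F n ≤ M := by
    intro n
    unfold betaWC
    exact Real.sSup_le (hub n) hM0
  have hbeta_ge : ∀ n : ℕ, 1 ≤ n → M - 1/(n:ℝ) ≤ betaWC F n := by
    intro n hn
    have hbdd : BddAbove { x : ℝ | ∃ (G : SimpleGraph (Fin n)) (w : Fin n → Fin n → ℝ),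
        (∀ u v, w u v = w v u) ∧
        (∀ u v, G.Adj u v → w u v ∈ Set.Icc (0 : ℝ) 1) ∧
        WCFree G w F ∧ x = wSum G w } := ⟨M, hub n⟩
    have hmem1 : wSum (modGraph n (q-1)) (fun _ _ => (1:ℝ)) ∈
        { x : ℝ | ∃ (G : SimpleGraph (Fin n)) (w : Fin n → Fin n → ℝ),
          (∀ u v, w u v = w v u) ∧
          (∀ u v, G.Adj u v → w u v ∈ Set.Icc (0 : ℝ) 1) ∧
          WCFree G w F ∧ x = wSum G w } := by
      refine ⟨modGraph n (q-1), fun _ _ => 1, fun _ _ => rfl,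
        fun u v _ => ⟨zero_le_one, le_refl 1⟩, ?_, rfl⟩
      intro C hC
      simp only [hF, Set.mem_insert_iff, Set.mem_singleton_iff] at hC
      rcases hC with rfl | rfl
      · apply notContains_of_cliqueFree
        have h1 := modGraph_cliqueFree n (q-1) hq1
        have he : q - 1 + 1 = q := by omega
        rw [he] at h1
        exact h1
      · apply notContains_of_cliqueFree
        exact SimpleGraph.CliqueFree.mono (by omega : q - 1 + 1 ≤ r + 1)
          (modGraph_cliqueFree n (q-1) hq1)
    have hmem2 : wSum (modGraph n r) (fun _ _ => a) ∈
        { x : ℝ | ∃ (G : SimpleGraph (Fin n)) (w : Fin n → Fin n → ℝ),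
          (∀ u v, w u v = w v u) ∧
          (∀ u v, G.Adj u v → w u v ∈ Set.Icc (0 : ℝ) 1) ∧
          WCFree G w F ∧ x = wSum G w } := by
      refine ⟨modGraph n r, fun _ _ => a, fun _ _ => rfl,
        fun u v _ => ⟨ha, ha1⟩, ?_, rfl⟩
      intro C hC
      simp only [hF, Set.mem_insert_iff, Set.mem_singleton_iff] at hC
      rcases hC with rfl | rfl
      · exact notContains_chubby_const hq (modGraph n r) a
      · apply notContains_of_cliqueFree
        exact modGraph_cliqueFree n r hr1
    have l1 : 1 - 1/((q:ℝ)-1) - 1/(n:ℝ) ≤ betaWC F n := by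
      have h := modsum_ge n (q-1) hq1 hn 1 zero_le_one le_rfl
      rw [Nat.cast_sub (by omega : 1 ≤ q), Nat.cast_one, one_mul] at h
      exact h.trans (by unfold betaWC; exact le_csSup hbdd hmem1)
    have l2 : a * (1 - 1/(r:ℝ)) - 1/(n:ℝ) ≤ betaWC F n := by
      have h := modsum_ge n r hr1 hn a ha ha1
      exact h.trans (by unfold betaWC; exact le_csSup hbdd hmem2)
    rcases le_total (1 - 1/((q:ℝ)-1)) (a * (1 - 1/(r:ℝ))) with h | h
    · rw [hM, max_eq_right h]; exact l2
    · rw [hM, max_eq_left h]; exact l1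
  have hgt : Filter.Tendsto (fun n : ℕ => M - 1/(n:ℝ)) Filter.atTop (nhds M) := by
    simpa using Filter.Tendsto.sub (tendsto_const_nhds (x := M))
      tendsto_one_div_atTop_nhds_zero_nat
  refine tendsto_of_tendsto_of_tendsto_of_le_of_le' hgt tendsto_const_nhds ?_ ?_
  · exact Filter.eventually_atTop.mpr ⟨1, fun n hn => hbeta_ge n hn⟩
  · exact Filter.Eventually.of_forall hbeta_le
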